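/- arXiv:1202.6461 — 3 statements merged into one kernel-verified Lean document; each statement's English description precedes it below -/
import Mathlib

section
/- For n ≥ 3 and m ≥ 1, the generalized Mycielski graph M_m(C_n) of the n-cycle is a cover graph if and only if n is even. -/
variable {V : Type*}

/-- An orientation of a simple graph `G`: each edge gets exactly one direction. -/
structure Orient (G : SimpleGraph V) where
  dir : V → V → Prop
  dir_adj : ∀ u v, dir u v → G.Adj u v
  adj_dir : ∀ u v, G.Adj u v → dir u v ∨ dir v u
  asymm : ∀ u v, dir u v → ¬ dir v u

/-- The relation obtained from `dir` by reversing the single arc `u → v`. -/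
def reverseArc (dir : V → V → Prop) (u v : V) : V → V → Prop :=
  fun a b => (dir a b ∧ ¬(a = u ∧ b = v)) ∨ (a = v ∧ b = u)

/-- A relation is acyclic if there is no directed cycle. -/
def IsAcyclicRel (dir : V → V → Prop) : Prop :=
  ∀ u v, dir u v → ¬ Relation.ReflTransGen dir v u

/-- An arc `u → v` is dependent if its reversal creates a directed cycle. -/
def DependentArc (dir : V → V → Prop) (u v : V) : Prop :=
  dir u v ∧ ¬ IsAcyclicRel (reverseArc dir u v)

/-- A cover graph admits an acyclic orientation with no dependent arcs. -/
def IsCoverGraph (G : SimpleGraph V) : Prop :=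
  ∃ D : Orient G, IsAcyclicRel D.dir ∧ ∀ u v, ¬ DependentArc D.dir u v

/-- The number of dependent arcs of an orientation. -/
noncomputable def numDependent {G : SimpleGraph V} (D : Orient G) : ℕ :=
  Set.ncard {p : V × V | DependentArc D.dir p.1 p.2}

/-- `d_min`: minimum number of dependent arcs over all acyclic orientations. -/
noncomputable def dmin (G : SimpleGraph V) : ℕ :=
  sInf {n | ∃ D : Orient G, IsAcyclicRel D.dir ∧ numDependent D = n}

/-- `d_max`: maximum number of dependent arcs over all acyclic orientations. -/
noncomputable def dmax (G : SimpleGraph V) : ℕ :=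
  sSup {n | ∃ D : Orient G, IsAcyclicRel D.dir ∧ numDependent D = n}

/-- `c(G)`: minimum number of edges to delete from `G` to get a cover graph. -/
noncomputable def coverDeletion (G : SimpleGraph V) : ℕ :=
  sInf {n | ∃ F : Set (Sym2 V), F ⊆ G.edgeSet ∧ IsCoverGraph (G.deleteEdges F) ∧ F.ncard = n}

/-- The generalized Mycielski graph `M_m(G)`; `none` is the apex `u`,
`some (i, a)` is the vertex `⟨i, a⟩`. -/
def genMycielski (G : SimpleGraph V) (m : ℕ) : SimpleGraph (Option (Fin (m + 1) × V)) where
  Adj x y :=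
    match x, y with
    | some (i, a), some (j, b) =>
        G.Adj a b ∧ ((i = j ∧ (i : ℕ) = 0) ∨ (i : ℕ) + 1 = (j : ℕ) ∨ (j : ℕ) + 1 = (i : ℕ))
    | some (i, _), none => (i : ℕ) = m
    | none, some (j, _) => (j : ℕ) = m
    | none, none => False
  symm := by
    constructor
    rintro (_ | ⟨i, a⟩) (_ | ⟨j, b⟩) h
    · exact h
    · exact h
    · exact h
    · refine ⟨h.1.symm, ?_⟩
      rcases h.2 with ⟨h1, h2⟩ | h' | h'
      · exact Or.inl ⟨h1.symm, h1 ▸ h2⟩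
      · exact Or.inr (Or.inr h')
      · exact Or.inr (Or.inl h')
  loopless := by
    constructor
    rintro (_ | ⟨i, a⟩) h <;> simp_all

section Helpers

variable {V : Type*}

private lemma acyclic_of_potential {r : V → V → Prop} (g : V → ℕ)
    (h : ∀ a b, r a b → g a < g b) : IsAcyclicRel r := by
  intro u v huv hvu
  have key : ∀ {x y : V}, Relation.ReflTransGen r x y → g x ≤ g y := by
    intro x y hxy
    induction hxy with
    | refl => exact le_rfl
    | tail _ hbc ih => exact ih.trans (h _ _ hbc).le
  exact absurd (key hvu) (not_le.mpr (h u v huv))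

end Helpers

section CycleFacts

variable {n : ℕ}

private lemma val_one_of (hn : 3 ≤ n) [NeZero n] : ((1 : Fin n) : ℕ) = 1 := by
  rw [Fin.val_one']; exact Nat.mod_eq_of_lt (by omega)

private lemma val_succ_of (hn : 3 ≤ n) [NeZero n] (a : Fin n) :
    ((a + 1 : Fin n) : ℕ) = (a.val + 1) % n := by
  rw [Fin.val_add, val_one_of hn]

private lemma cyc_adj_succ (hn : 3 ≤ n) [NeZero n] (j : Fin n) :
    (SimpleGraph.cycleGraph n).Adj j (j + 1) := by
  rw [SimpleGraph.cycleGraph_adj']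
  right
  have : j + 1 - j = 1 := by open Fin.CommRing in ring
  rw [this, val_one_of hn]

private lemma cyc_adj_cases (hn : 3 ≤ n) [NeZero n] {a b : Fin n}
    (h : (SimpleGraph.cycleGraph n).Adj a b) : a = b + 1 ∨ b = a + 1 := by
  rw [SimpleGraph.cycleGraph_adj'] at h
  rcases h with h | h
  · left
    have : a - b = 1 := Fin.ext (by rw [h, val_one_of hn])
    have := sub_eq_iff_eq_add.mp this
    rw [this, add_comm]
  · right
    have : b - a = 1 := Fin.ext (by rw [h, val_one_of hn])
    have := sub_eq_iff_eq_add.mp this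
    rw [this, add_comm]

private lemma parity_succ (hn : 3 ≤ n) (hne : n % 2 = 0) [NeZero n] (a : Fin n) :
    ((a + 1 : Fin n) : ℕ) % 2 ≠ (a : ℕ) % 2 := by
  rw [val_succ_of hn]
  rcases Nat.lt_or_ge (a.val + 1) n with h | h
  · rw [Nat.mod_eq_of_lt h]; omega
  · have ha := a.isLt
    have h1 : a.val + 1 = n := by omega
    rw [h1, Nat.mod_self]
    omega

private lemma cyc_parity (hn : 3 ≤ n) (hne : n % 2 = 0) [NeZero n] {a b : Fin n}
    (h : (SimpleGraph.cycleGraph n).Adj a b) : (a : ℕ) % 2 ≠ (b : ℕ) % 2 := by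
  rcases cyc_adj_cases hn h with h' | h'
  · rw [h']; exact parity_succ hn hne b
  · rw [h']; exact (parity_succ hn hne a).symm

private lemma two_ne_zero_fin (hn : 3 ≤ n) [NeZero n] : (2 : Fin n) ≠ 0 := by
  intro h
  have h2 : (2 : Fin n) = 1 + 1 := by open Fin.CommRing in ring
  have : ((2 : Fin n) : ℕ) = 2 := by
    rw [h2, Fin.val_add, val_one_of hn]
    exact Nat.mod_eq_of_lt (by omega)
  rw [h] at this
  simp at this

private lemma ne_add_two (hn : 3 ≤ n) [NeZero n] (j : Fin n) : j ≠ j + 2 := by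
  intro h
  exact two_ne_zero_fin hn (left_eq_add.mp h)

end CycleFacts

section GMAdj

variable {W : Type*} {G : SimpleGraph W} {m : ℕ}

private lemma gm_adj_ss {i j : Fin (m+1)} {a b : W} :
    (genMycielski G m).Adj (some (i,a)) (some (j,b)) ↔
      (G.Adj a b ∧ ((i = j ∧ (i : ℕ) = 0) ∨ (i : ℕ) + 1 = (j : ℕ) ∨ (j : ℕ) + 1 = (i : ℕ))) :=
  Iff.rfl

private lemma gm_adj_sn {i : Fin (m+1)} {a : W} :
    (genMycielski G m).Adj (some (i,a)) none ↔ (i : ℕ) = m := Iff.rfl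

private lemma gm_adj_ns {i : Fin (m+1)} {a : W} :
    (genMycielski G m).Adj none (some (i,a)) ↔ (i : ℕ) = m := Iff.rfl

private lemma gm_adj_nn : (genMycielski G m).Adj none none ↔ False := Iff.rfl

end GMAdj

section EvenDir

private def fE (m n : ℕ) : Option (Fin (m+1) × Fin n) → ℕ
  | none => 2
  | some (_, j) => (j : ℕ) % 2

private lemma fE_le (m n : ℕ) (x : Option (Fin (m+1) × Fin n)) : fE m n x ≤ 2 := by
  rcases x with _ | ⟨i, j⟩
  · exact le_rfl
  · show (j : ℕ) % 2 ≤ 2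
    omega

private theorem even_coverGraph {n m : ℕ} (hn : 3 ≤ n) (hm : 1 ≤ m) (hne : n % 2 = 0) :
    IsCoverGraph (genMycielski (SimpleGraph.cycleGraph n) m) := by
  classical
  haveI : NeZero n := ⟨by omega⟩
  set G := genMycielski (SimpleGraph.cycleGraph n) m with hG
  set f := fE m n with hf
  -- adjacent vertices have different f-values
  have hfne : ∀ x y, G.Adj x y → f x ≠ f y := by
    rintro (_ | ⟨i, a⟩) (_ | ⟨j, b⟩) h
    · exact (gm_adj_nn.mp h).elim
    · have : (b : ℕ) % 2 < 2 := Nat.mod_lt _ (by omega)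
      show (2 : ℕ) ≠ (b : ℕ) % 2
      omega
    · have : (a : ℕ) % 2 < 2 := Nat.mod_lt _ (by omega)
      show (a : ℕ) % 2 ≠ 2
      omega
    · exact cyc_parity hn hne (gm_adj_ss.mp h).1
  refine ⟨⟨fun x y => G.Adj x y ∧ f x < f y, fun u v h => h.1, ?_, ?_⟩, ?_, ?_⟩
  · intro u v h
    rcases lt_or_gt_of_ne (hfne u v h) with h' | h'
    · exact Or.inl ⟨h, h'⟩
    · exact Or.inr ⟨h.symm, h'⟩
  · rintro u v ⟨_, h1⟩ ⟨_, h2⟩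
    omega
  · exact acyclic_of_potential f (fun a b hab => hab.2)
  · rintro p q ⟨⟨hadj, hfpq⟩, hcyc⟩
    apply hcyc
    rcases q with _ | ⟨iq, jq⟩
    · -- q = none : p is at level m
      rcases p with _ | ⟨ip, jp⟩
      · exact (gm_adj_nn.mp hadj).elim
      have hip : (ip : ℕ) = m := gm_adj_sn.mp hadj
      apply acyclic_of_potential
        (g := fun x => if x = some (ip, jp) then 7 else
          (match x with
           | none => 5
           | some (i, j) => if (j : ℕ) % 2 = 1 ∧ (i : ℕ) ≠ m then 20 else 3 * ((j : ℕ) % 2)))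
      rintro a b (⟨⟨hab, hfab⟩, hne'⟩ | ⟨rfl, rfl⟩)
      · rcases a with _ | ⟨ia, ja⟩
        · -- a = none : impossible, f none = 2 maximal
          exfalso
          have := fE_le m n b
          show False
          simp only [hf] at hfab
          have h2 : fE m n none = 2 := rfl
          omega
        · rcases b with _ | ⟨ib, jb⟩
          · -- b = none
            have hia : (ia : ℕ) = m := gm_adj_sn.mp hab
            have hap : some (ia, ja) ≠ some (ip, jp) := by
              intro h; exact hne' ⟨h, rfl⟩
            rw [if_neg hap, if_neg (by simp : (none : Option (Fin (m+1) × Fin n)) ≠ some (ip, jp))]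
            show (if (ja : ℕ) % 2 = 1 ∧ (ia : ℕ) ≠ m then 20 else 3 * ((ja : ℕ) % 2)) < 5
            rw [if_neg (by omega)]
            omega
          · -- a, b both some
            have hfa : f (some (ia, ja)) = (ja : ℕ) % 2 := rfl
            have hfb : f (some (ib, jb)) = (jb : ℕ) % 2 := rfl
            have hja : (ja : ℕ) % 2 = 0 := by
              have h1 : (ja : ℕ) % 2 < 2 := Nat.mod_lt _ (by omega)
              have h2 : (jb : ℕ) % 2 < 2 := Nat.mod_lt _ (by omega)
              rw [hfa, hfb] at hfab; omega
            have hjb : (jb : ℕ) % 2 = 1 := by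
              have h2 : (jb : ℕ) % 2 < 2 := Nat.mod_lt _ (by omega)
              rw [hfa, hfb] at hfab; omega
            by_cases hbp : (some (ib, jb) : Option (Fin (m+1) × Fin n)) = some (ip, jp)
            · rw [if_pos hbp]
              have hap : some (ia, ja) ≠ some (ip, jp) := by
                intro h
                rw [← h] at hbp
                injection hbp with hh
                have h2 : jb = ja := congrArg Prod.snd hh
                rw [h2] at hjb; omega
              rw [if_neg hap]
              show (if (ja : ℕ) % 2 = 1 ∧ (ia : ℕ) ≠ m then 20 else 3 * ((ja : ℕ) % 2)) < 7
              rw [if_neg (by omega)]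
              omega
            · rw [if_neg hbp]
              show _ < (if (jb : ℕ) % 2 = 1 ∧ (ib : ℕ) ≠ m then 20 else 3 * ((jb : ℕ) % 2))
              by_cases hap : (some (ia, ja) : Option (Fin (m+1) × Fin n)) = some (ip, jp)
              · -- a = p : level m, so b is at level m - 1 ≠ m
                rw [if_pos hap]
                injection hap with hh
                have hiap : ia = ip := congrArg Prod.fst hh
                have hib : (ib : ℕ) ≠ m := by
                  rcases (gm_adj_ss.mp hab).2 with ⟨h1, h2⟩ | h1 | h1
                  · rw [hiap, hip] at h2; omega
                  · have := ib.isLt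
                    rw [hiap, hip] at h1; omega
                  · rw [hiap, hip] at h1; omega
                rw [if_pos ⟨hjb, hib⟩]
                omega
              · rw [if_neg hap]
                show (if (ja : ℕ) % 2 = 1 ∧ (ia : ℕ) ≠ m then 20 else 3 * ((ja : ℕ) % 2)) < _
                rw [if_neg (by omega)]
                split
                · omega
                · omega
      · -- reversed arc : none → p
        rw [if_neg (by simp : (none : Option (Fin (m+1) × Fin n)) ≠ some (ip, jp)), if_pos rfl]
        show (5 : ℕ) < 7
        omega
    · -- q = some (iq, jq)
      rcases p with _ | ⟨ip, jp⟩
      · exfalso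
        have h1 : f none = 2 := rfl
        have h2 : f (some (iq, jq)) = (jq : ℕ) % 2 := rfl
        have : (jq : ℕ) % 2 < 2 := Nat.mod_lt _ (by omega)
        omega
      have hfp : f (some (ip, jp)) = (jp : ℕ) % 2 := rfl
      have hfq : f (some (iq, jq)) = (jq : ℕ) % 2 := rfl
      have hjp : (jp : ℕ) % 2 = 0 := by
        have h1 : (jp : ℕ) % 2 < 2 := Nat.mod_lt _ (by omega)
        have h2 : (jq : ℕ) % 2 < 2 := Nat.mod_lt _ (by omega)
        omega
      have hjq : (jq : ℕ) % 2 = 1 := by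
        have h2 : (jq : ℕ) % 2 < 2 := Nat.mod_lt _ (by omega)
        omega
      apply acyclic_of_potential
        (g := fun x => if x = some (ip, jp) then 2 else if x = some (iq, jq) then 1 else 3 * f x)
      rintro a b (⟨⟨hab, hfab⟩, hne'⟩ | ⟨rfl, rfl⟩)
      · rcases a with _ | ⟨ia, ja⟩
        · exfalso
          have := fE_le m n b
          have h2 : fE m n none = 2 := rfl
          simp only [hf] at hfab
          omega
        · have hfa : f (some (ia, ja)) = (ja : ℕ) % 2 := rfl
          rcases b with _ | ⟨ib, jb⟩
          · -- b = none
            rw [if_neg (by simp : (none : Option (Fin (m+1) × Fin n)) ≠ some (ip, jp)),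
              if_neg (by simp : (none : Option (Fin (m+1) × Fin n)) ≠ some (iq, jq))]
            have h6 : 3 * f (none : Option (Fin (m+1) × Fin n)) = 6 := rfl
            rw [h6]
            have hja2 : (ja : ℕ) % 2 < 2 := Nat.mod_lt _ (by omega)
            split
            · omega
            · split
              · omega
              · rw [hfa]; omega
          · have hfb : f (some (ib, jb)) = (jb : ℕ) % 2 := rfl
            have hja : (ja : ℕ) % 2 = 0 := by
              have h1 : (ja : ℕ) % 2 < 2 := Nat.mod_lt _ (by omega)
              have h2 : (jb : ℕ) % 2 < 2 := Nat.mod_lt _ (by omega)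
              rw [hfa, hfb] at hfab; omega
            have hjb : (jb : ℕ) % 2 = 1 := by
              have h2 : (jb : ℕ) % 2 < 2 := Nat.mod_lt _ (by omega)
              rw [hfa, hfb] at hfab; omega
            have hbp : (some (ib, jb) : Option (Fin (m+1) × Fin n)) ≠ some (ip, jp) := by
              intro h
              injection h with hh
              have : jb = jp := congrArg Prod.snd hh
              rw [this] at hjb; omega
            have haq : (some (ia, ja) : Option (Fin (m+1) × Fin n)) ≠ some (iq, jq) := by
              intro h
              injection h with hh
              have : ja = jq := congrArg Prod.snd hh
              rw [this] at hja; omega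
            rw [if_neg hbp]
            by_cases hbq : (some (ib, jb) : Option (Fin (m+1) × Fin n)) = some (iq, jq)
            · rw [if_pos hbq]
              have hap : (some (ia, ja) : Option (Fin (m+1) × Fin n)) ≠ some (ip, jp) := by
                intro h
                exact hne' ⟨h, hbq⟩
              rw [if_neg hap, if_neg haq, hfa, hja]
              omega
            · rw [if_neg hbq, hfb, hjb]
              by_cases hap : (some (ia, ja) : Option (Fin (m+1) × Fin n)) = some (ip, jp)
              · rw [if_pos hap]; omega
              · rw [if_neg hap, if_neg haq, hfa, hja]; omega
      · -- reversed arc : q → p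
        have hqp : (some (iq, jq) : Option (Fin (m+1) × Fin n)) ≠ some (ip, jp) := by
          intro h
          injection h with hh
          have : jq = jp := congrArg Prod.snd hh
          rw [this] at hjq; omega
        rw [if_neg hqp, if_pos rfl, if_pos rfl]
        omega

end EvenDir

section OddDir

open Classical in
private noncomputable def eps {V : Type*} {G : SimpleGraph V} (D : Orient G) (a b : V) : ℤ :=
  if D.dir a b then 1 else -1

variable {V : Type*} {G : SimpleGraph V} {D : Orient G}

private lemma eps_pos {a b : V} (h : D.dir a b) : eps D a b = 1 := if_pos h

private lemma eps_neg {a b : V} (h : D.dir a b) : eps D b a = -1 := if_neg (D.asymm a b h)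

private lemma no4 (hacyc : IsAcyclicRel D.dir) {a b c d : V}
    (hab : D.dir a b) (hbc : D.dir b c) (hcd : D.dir c d) (hda : D.dir d a) : False :=
  hacyc a b hab (Relation.ReflTransGen.head hbc
    (Relation.ReflTransGen.head hcd (Relation.ReflTransGen.single hda)))

private lemma dep3 (hnodep : ∀ u v, ¬ DependentArc D.dir u v) {a b c d : V}
    (hab : D.dir a b) (hbc : D.dir b c) (hcd : D.dir c d) (had : D.dir a d)
    (hbd : b ≠ d) (hac : a ≠ c) : False := by
  apply hnodep a d
  refine ⟨had, fun hA => ?_⟩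
  have hstep : reverseArc D.dir a d d a := Or.inr ⟨rfl, rfl⟩
  apply hA d a hstep
  have hne_ab : a ≠ b := (D.dir_adj _ _ hab).ne
  have h1 : reverseArc D.dir a d a b := Or.inl ⟨hab, fun h => hbd h.2⟩
  have h2 : reverseArc D.dir a d b c := Or.inl ⟨hbc, fun h => hne_ab h.1.symm⟩
  have h3 : reverseArc D.dir a d c d := Or.inl ⟨hcd, fun h => hac h.1.symm⟩
  exact Relation.ReflTransGen.head h1
    (Relation.ReflTransGen.head h2 (Relation.ReflTransGen.single h3))

private lemma quadrel (hacyc : IsAcyclicRel D.dir) (hnodep : ∀ u v, ¬ DependentArc D.dir u v)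
    {a b c d : V} (h1 : G.Adj a b) (h2 : G.Adj b c) (h3 : G.Adj c d) (h4 : G.Adj a d)
    (hac : a ≠ c) (hbd : b ≠ d) :
    eps D a b + eps D b c = eps D a d + eps D d c := by
  rcases D.adj_dir _ _ h1 with p1 | p1 <;> rcases D.adj_dir _ _ h2 with p2 | p2 <;>
    rcases D.adj_dir _ _ h3 with p3 | p3 <;> rcases D.adj_dir _ _ h4 with p4 | p4
  · -- FFFF : a→b, b→c, c→d, a→d : lone backward arc a→d
    exact absurd (dep3 hnodep p1 p2 p3 p4 hbd hac) not_false
  · -- FFFS : directed 4-cycle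
    exact absurd (no4 hacyc p1 p2 p3 p4) not_false
  · -- FFSF : a→b, b→c, d→c, a→d : ok
    rw [eps_pos p1, eps_pos p2, eps_pos p4, eps_pos p3]
  · -- FFSS : a→b, b→c, d→c, d→a : lone arc d→c
    exact absurd (dep3 hnodep p4 p1 p2 p3 hac hbd.symm) not_false
  · -- FSFF : a→b, c→b, c→d, a→d : ok
    rw [eps_pos p1, eps_neg p2, eps_pos p4, eps_neg p3]
  · -- FSFS : a→b, c→b, c→d, d→a : lone arc c→b
    exact absurd (dep3 hnodep p3 p4 p1 p2 hbd.symm hac.symm) not_false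
  · -- FSSF : a→b, c→b, d→c, a→d : lone arc a→b
    exact absurd (dep3 hnodep p4 p3 p2 p1 hbd.symm hac) not_false
  · -- FSSS : a→b, c→b, d→c, d→a : ok
    rw [eps_pos p1, eps_neg p2, eps_neg p4, eps_pos p3]
    norm_num
  · -- SFFF : b→a, b→c, c→d, a→d : ok
    rw [eps_neg p1, eps_pos p2, eps_pos p4, eps_neg p3]
    norm_num
  · -- SFFS : b→a, b→c, c→d, d→a : lone arc b→a
    exact absurd (dep3 hnodep p2 p3 p4 p1 hac.symm hbd) not_false
  · -- SFSF : b→a, b→c, d→c, a→d : lone arc b→c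
    exact absurd (dep3 hnodep p1 p4 p3 p2 hac hbd) not_false
  · -- SFSS : b→a, b→c, d→c, d→a : ok
    rw [eps_neg p1, eps_pos p2, eps_neg p4, eps_pos p3]
  · -- SSFF : b→a, c→b, c→d, a→d : lone arc c→d
    exact absurd (dep3 hnodep p2 p1 p4 p3 hbd hac.symm) not_false
  · -- SSFS : b→a, c→b, c→d, d→a : ok
    rw [eps_neg p1, eps_neg p2, eps_neg p4, eps_neg p3]
  · -- SSSF : reversed directed 4-cycle
    exact absurd (no4 hacyc p4 p3 p2 p1) not_false
  · -- SSSS : lone arc d→a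
    exact absurd (dep3 hnodep p3 p2 p1 p4 hac.symm hbd.symm) not_false

end OddDir

section OddMain

private def Xv (m n : ℕ) (i : ℕ) (j : Fin n) : Option (Fin (m+1) × Fin n) :=
  if h : i < m + 1 then some (⟨i, h⟩, j) else none

private lemma Xv_eq {m n : ℕ} {i : ℕ} (h : i ≤ m) (j : Fin n) :
    Xv m n i j = some (⟨i, Nat.lt_succ_of_le h⟩, j) := dif_pos _

private theorem odd_not_coverGraph {n m : ℕ} (hn : 3 ≤ n) (hm : 1 ≤ m) (ho : n % 2 = 1)
    (D : Orient (genMycielski (SimpleGraph.cycleGraph n) m))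
    (hacyc : IsAcyclicRel D.dir) (hnodep : ∀ u v, ¬ DependentArc D.dir u v) : False := by
  classical
  haveI : NeZero n := ⟨by omega⟩
  -- basic adjacency facts
  have adjUp : ∀ (i : ℕ), i + 1 ≤ m → ∀ {a b : Fin n}, (SimpleGraph.cycleGraph n).Adj a b →
      (genMycielski (SimpleGraph.cycleGraph n) m).Adj (Xv m n i a) (Xv m n (i+1) b) := by
    intro i hi a b hab
    rw [Xv_eq (i := i) (by omega), Xv_eq (i := i+1) hi]
    exact gm_adj_ss.mpr ⟨hab, Or.inr (Or.inl rfl)⟩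
  have adjDown : ∀ (i : ℕ), i + 1 ≤ m → ∀ {a b : Fin n}, (SimpleGraph.cycleGraph n).Adj a b →
      (genMycielski (SimpleGraph.cycleGraph n) m).Adj (Xv m n (i+1) a) (Xv m n i b) := by
    intro i hi a b hab
    rw [Xv_eq (i := i+1) hi, Xv_eq (i := i) (by omega)]
    exact gm_adj_ss.mpr ⟨hab, Or.inr (Or.inr rfl)⟩
  have adjH : ∀ {a b : Fin n}, (SimpleGraph.cycleGraph n).Adj a b →
      (genMycielski (SimpleGraph.cycleGraph n) m).Adj (Xv m n 0 a) (Xv m n 0 b) := by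
    intro a b hab
    rw [Xv_eq (i := 0) (by omega) a, Xv_eq (i := 0) (by omega) b]
    refine gm_adj_ss.mpr ⟨hab, Or.inl ⟨rfl, ?_⟩⟩
    simp
  have adjTop : ∀ (j : Fin n),
      (genMycielski (SimpleGraph.cycleGraph n) m).Adj (Xv m n m j) none := by
    intro j
    rw [Xv_eq (i := m) le_rfl]
    exact gm_adj_sn.mpr rfl
  have XneL : ∀ (i i' : ℕ), i ≤ m → i' ≤ m → i ≠ i' → ∀ (a b : Fin n),
      Xv m n i a ≠ Xv m n i' b := by
    intro i i' hi hi' hne a b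
    rw [Xv_eq hi, Xv_eq hi']
    intro h
    injection h with hh
    have h2 := congrArg Prod.fst hh
    have h3 := congrArg Fin.val h2
    simp at h3
    omega
  have XneJ : ∀ (i : ℕ), i ≤ m → ∀ (a b : Fin n), a ≠ b → Xv m n i a ≠ Xv m n i b := by
    intro i hi a b hne
    rw [Xv_eq hi, Xv_eq hi]
    intro h
    injection h with hh
    exact hne (congrArg Prod.snd hh)
  have Xns : ∀ (i : ℕ), i ≤ m → ∀ (a : Fin n), Xv m n i a ≠ none := by
    intro i hi a
    rw [Xv_eq hi]
    simp
  -- index shifting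
  have shift : ∀ (c : Fin n) (F : Fin n → ℤ), (∑ j : Fin n, F (j + c)) = ∑ j : Fin n, F j :=
    fun c F => Fintype.sum_equiv (Equiv.addRight c) _ _ (fun j => rfl)
  have jadd : ∀ j : Fin n, j + 1 + 1 = j + 2 := fun j => by open Fin.CommRing in ring
  -- reindexing : tent sum at level (i, i+1) equals down-tent sum from level i+1
  have step1 : ∀ i : ℕ,
      (∑ j : Fin n, (eps D (Xv m n i j) (Xv m n (i+1) (j+1))
        + eps D (Xv m n (i+1) (j+1)) (Xv m n i (j+2))))
      = ∑ j : Fin n, (eps D (Xv m n (i+1) j) (Xv m n i (j+1))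
        + eps D (Xv m n i (j+1)) (Xv m n (i+1) (j+2))) := by
    intro i
    rw [Finset.sum_add_distrib, Finset.sum_add_distrib]
    have h1 : (∑ j : Fin n, eps D (Xv m n (i+1) (j+1)) (Xv m n i (j+2)))
        = ∑ j : Fin n, eps D (Xv m n (i+1) j) (Xv m n i (j+1)) := by
      have := shift 1 (fun j => eps D (Xv m n (i+1) j) (Xv m n i (j+1)))
      simp only [jadd] at this
      exact this
    have h2 : (∑ j : Fin n, eps D (Xv m n i (j+1)) (Xv m n (i+1) (j+2)))
        = ∑ j : Fin n, eps D (Xv m n i j) (Xv m n (i+1) (j+1)) := by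
      have := shift 1 (fun j => eps D (Xv m n i j) (Xv m n (i+1) (j+1)))
      simp only [jadd] at this
      exact this
    rw [h1, h2]
    ring
  -- quad step : for i+2 ≤ m the tent sums at consecutive levels agree
  have stepB : ∀ i : ℕ, i + 2 ≤ m →
      (∑ j : Fin n, (eps D (Xv m n i j) (Xv m n (i+1) (j+1))
        + eps D (Xv m n (i+1) (j+1)) (Xv m n i (j+2))))
      = ∑ j : Fin n, (eps D (Xv m n (i+1) j) (Xv m n (i+2) (j+1))
        + eps D (Xv m n (i+2) (j+1)) (Xv m n (i+1) (j+2))) := by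
    intro i hi
    rw [step1 i]
    refine Finset.sum_congr rfl (fun j _ => ?_)
    have e1 : (SimpleGraph.cycleGraph n).Adj j (j+1) := cyc_adj_succ hn j
    have e2 : (SimpleGraph.cycleGraph n).Adj (j+1) (j+2) := by
      have := cyc_adj_succ hn (j+1)
      rwa [jadd] at this
    have q1 : (genMycielski (SimpleGraph.cycleGraph n) m).Adj
        (Xv m n (i+1) j) (Xv m n i (j+1)) := adjDown i (by omega) e1
    have q2 : (genMycielski (SimpleGraph.cycleGraph n) m).Adj
        (Xv m n i (j+1)) (Xv m n (i+1) (j+2)) := adjUp i (by omega) e2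
    have q3 : (genMycielski (SimpleGraph.cycleGraph n) m).Adj
        (Xv m n (i+1) (j+2)) (Xv m n (i+2) (j+1)) := by
      have := adjUp (i+1) (by omega) e2.symm
      exact this
    have q4 : (genMycielski (SimpleGraph.cycleGraph n) m).Adj
        (Xv m n (i+1) j) (Xv m n (i+2) (j+1)) := by
      have := adjUp (i+1) (by omega) e1
      exact this
    exact quadrel hacyc hnodep q1 q2 q3 q4
      (XneJ (i+1) (by omega) j (j+2) (ne_add_two hn j))
      (XneL i (i+2) (by omega) (by omega) (by omega) (j+1) (j+1))
  -- top step : the tent sum just below the apex vanishes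
  have stepC : ∀ i : ℕ, i + 1 = m →
      (∑ j : Fin n, (eps D (Xv m n i j) (Xv m n (i+1) (j+1))
        + eps D (Xv m n (i+1) (j+1)) (Xv m n i (j+2)))) = 0 := by
    intro i hi
    rw [step1 i]
    have hq : ∀ j : Fin n,
        eps D (Xv m n (i+1) j) (Xv m n i (j+1)) + eps D (Xv m n i (j+1)) (Xv m n (i+1) (j+2))
        = eps D (Xv m n (i+1) j) none + eps D none (Xv m n (i+1) (j+2)) := by
      intro j
      have e1 : (SimpleGraph.cycleGraph n).Adj j (j+1) := cyc_adj_succ hn j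
      have e2 : (SimpleGraph.cycleGraph n).Adj (j+1) (j+2) := by
        have := cyc_adj_succ hn (j+1)
        rwa [jadd] at this
      have h3 : (genMycielski (SimpleGraph.cycleGraph n) m).Adj (Xv m n (i+1) (j+2)) none := by
        rw [hi]; exact adjTop (j+2)
      have h4 : (genMycielski (SimpleGraph.cycleGraph n) m).Adj (Xv m n (i+1) j) none := by
        rw [hi]; exact adjTop j
      exact quadrel hacyc hnodep (adjDown i (by omega) e1) (adjUp i (by omega) e2) h3 h4
        (XneJ (i+1) (by omega) j (j+2) (ne_add_two hn j))
        (Xns i (by omega) (j+1))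
    rw [Finset.sum_congr rfl (fun j _ => hq j), Finset.sum_add_distrib]
    have h2 : (∑ j : Fin n, eps D none (Xv m n (i+1) (j+2)))
        = ∑ j : Fin n, eps D none (Xv m n (i+1) j) :=
      shift 2 (fun j => eps D none (Xv m n (i+1) j))
    rw [h2, ← Finset.sum_add_distrib]
    refine Finset.sum_eq_zero (fun j _ => ?_)
    have hadj : (genMycielski (SimpleGraph.cycleGraph n) m).Adj (Xv m n (i+1) j) none := by
      rw [hi]; exact adjTop j
    rcases D.adj_dir _ _ hadj with h | h
    · rw [eps_pos h, eps_neg h]; norm_num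
    · rw [eps_neg h, eps_pos h]; norm_num
  -- telescoping chain
  have key : ∀ d i : ℕ, i + 1 + d = m →
      (∑ j : Fin n, (eps D (Xv m n i j) (Xv m n (i+1) (j+1))
        + eps D (Xv m n (i+1) (j+1)) (Xv m n i (j+2)))) = 0 := by
    intro d
    induction d with
    | zero => intro i hi; exact stepC i (by omega)
    | succ k ih =>
        intro i hi
        rw [stepB i (by omega)]
        exact ih (i+1) (by omega)
  have hS0 : (∑ j : Fin n, (eps D (Xv m n 0 j) (Xv m n 0 (j+1))
      + eps D (Xv m n 0 (j+1)) (Xv m n 0 (j+2)))) = 0 := by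
    have h0 : (∑ j : Fin n, (eps D (Xv m n 0 j) (Xv m n 1 (j+1))
        + eps D (Xv m n 1 (j+1)) (Xv m n 0 (j+2)))) = 0 := key (m-1) 0 (by omega)
    rw [← h0]
    refine Finset.sum_congr rfl (fun j _ => ?_)
    have e1 : (SimpleGraph.cycleGraph n).Adj j (j+1) := cyc_adj_succ hn j
    have e2 : (SimpleGraph.cycleGraph n).Adj (j+1) (j+2) := by
      have := cyc_adj_succ hn (j+1)
      rwa [jadd] at this
    exact (quadrel hacyc hnodep (adjUp 0 (by omega) e1) (adjDown 0 (by omega) e2)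
      (adjH e2.symm) (adjH e1)
      (XneJ 0 (by omega) j (j+2) (ne_add_two hn j))
      (XneL 1 0 (by omega) (by omega) (by omega) (j+1) (j+1))).symm
  -- hence the winding number of the base cycle is zero
  have hPhi : (∑ j : Fin n, eps D (Xv m n 0 j) (Xv m n 0 (j+1))) = 0 := by
    rw [Finset.sum_add_distrib] at hS0
    have h2 : (∑ j : Fin n, eps D (Xv m n 0 (j+1)) (Xv m n 0 (j+2)))
        = ∑ j : Fin n, eps D (Xv m n 0 j) (Xv m n 0 (j+1)) := by
      have := shift 1 (fun j => eps D (Xv m n 0 j) (Xv m n 0 (j+1)))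
      simp only [jadd] at this
      exact this
    rw [h2] at hS0
    linarith
  -- but each summand is ±1 and there are an odd number of them
  have hpm : ∀ j : Fin n, ((eps D (Xv m n 0 j) (Xv m n 0 (j+1)) : ℤ) : ZMod 2) = 1 := by
    intro j
    unfold eps
    split
    · norm_num
    · norm_num
      decide
  have hcast := congrArg (fun z : ℤ => (z : ZMod 2)) hPhi
  simp only [Int.cast_zero] at hcast
  rw [Int.cast_sum] at hcast
  rw [Finset.sum_congr rfl (fun j _ => hpm j), Finset.sum_const, Finset.card_univ,
    Fintype.card_fin, nsmul_eq_mul, mul_one] at hcast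
  have hn2 : ((n : ℕ) : ZMod 2) = 1 := by
    have : ((n % 2 : ℕ) : ZMod 2) = ((n : ℕ) : ZMod 2) := ZMod.natCast_mod n 2 ▸ rfl
    rw [← this, ho]
    norm_num
  rw [hn2] at hcast
  exact absurd hcast (by decide)

end OddMain

theorem genMycielski_cycle_coverGraph_iff_even (n m : ℕ) (hn : 3 ≤ n) (hm : 1 ≤ m) :
    IsCoverGraph (genMycielski (SimpleGraph.cycleGraph n) m) ↔ Even n := by
  constructor
  · intro h
    by_contra ho
    rw [Nat.even_iff] at ho
    obtain ⟨D, h1, h2⟩ := h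
    exact odd_not_coverGraph hn hm (by omega) D h1 h2
  · intro he
    exact even_coverGraph hn hm (Nat.even_iff.mp he)
end

section
/- If G is a triangle-free graph with at least two edges and d_min(G) ≥ 1, then d_min(M_m(G)) ≥ d_min(G) + 2 for every positive integer m. -/
variable {V : Type*}

/-! ### Auxiliary machinery -/

section AuxMachinery

variable {V : Type*}

lemma genMycielski_adj_some {G : SimpleGraph V} {m : ℕ} {i j : Fin (m + 1)} {a b : V} :
    (genMycielski G m).Adj (some (i, a)) (some (j, b)) ↔
      G.Adj a b ∧ ((i = j ∧ (i : ℕ) = 0) ∨ (i : ℕ) + 1 = (j : ℕ) ∨ (j : ℕ) + 1 = (i : ℕ)) :=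
  Iff.rfl

/-- Transferring a dependent arc along an injective digraph map. -/
lemma depTransfer {A B : Type*} {r : A → A → Prop} {s : B → B → Prop} {f : A → B}
    (hf : Function.Injective f) (h : ∀ x y, r x y → s (f x) (f y)) {a b : A}
    (hd : DependentArc r a b) : DependentArc s (f a) (f b) := by
  obtain ⟨hab, hcyc⟩ := hd
  have key : ∀ x y, reverseArc r a b x y → reverseArc s (f a) (f b) (f x) (f y) := by
    rintro x y (⟨hxy, hne⟩ | ⟨hx, hy⟩)
    · exact Or.inl ⟨h _ _ hxy, fun he => hne ⟨hf he.1, hf he.2⟩⟩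
    · exact Or.inr ⟨by rw [hx], by rw [hy]⟩
  refine ⟨h _ _ hab, fun hs => hcyc ?_⟩
  intro p q hpq hrtg
  exact hs (f p) (f q) (key _ _ hpq) (Relation.ReflTransGen.lift f key _ _ hrtg)

/-- Every graph on a finite vertex type has an acyclic orientation. -/
lemma exists_acyclicOrient (H : SimpleGraph V) [Fintype V] :
    ∃ D : Orient H, IsAcyclicRel D.dir := by
  let e := Fintype.equivFin V
  refine ⟨⟨fun u v => H.Adj u v ∧ e u < e v, fun u v h => h.1, ?_, ?_⟩, ?_⟩
  · intro u v h
    rcases lt_or_gt_of_ne (fun hh : e u = e v => h.ne (e.injective hh)) with h' | h'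
    · exact Or.inl ⟨h, h'⟩
    · exact Or.inr ⟨h.symm, h'⟩
  · rintro u v ⟨-, h⟩ ⟨-, h'⟩
    exact absurd h' (not_lt.mpr h.le)
  · rintro u v ⟨-, hlt⟩ hrtg
    have mono : ∀ x y, Relation.ReflTransGen (fun u v => H.Adj u v ∧ e u < e v) x y →
        e x ≤ e y := by
      intro x y hxy
      induction hxy with
      | refl => exact le_refl _
      | tail _ h ih => exact ih.trans h.2.le
    exact absurd (mono _ _ hrtg) (not_le.mpr hlt)

/-- The level-0 copy of a vertex. -/
def mycS0 (m : ℕ) (a : V) : Option (Fin (m + 1) × V) := some (⟨0, Nat.succ_pos m⟩, a)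

/-- The level-1 copy of a vertex. -/
def mycS1 (m : ℕ) (hm : 0 < m) (a : V) : Option (Fin (m + 1) × V) :=
  some (⟨1, by omega⟩, a)

lemma mycS0_injective (m : ℕ) : Function.Injective (mycS0 (V := V) m) := by
  intro a b h
  simpa [mycS0] using h

lemma mycS1_ne_mycS0 {m : ℕ} (hm : 0 < m) (x y : V) : mycS1 m hm x ≠ mycS0 m y := by
  simp [mycS0, mycS1, Fin.ext_iff]

lemma mycS1_injective (m : ℕ) (hm : 0 < m) : Function.Injective (mycS1 (V := V) m hm) := by
  intro a b h
  simpa [mycS1] using h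

open Classical in
/-- Representative map: vertices in `S` go to level 1, others to level 0. -/
noncomputable def mycRho (m : ℕ) (hm : 0 < m) (S : Set V) (a : V) :
    Option (Fin (m + 1) × V) :=
  if a ∈ S then mycS1 m hm a else mycS0 m a

lemma mycRho_of_mem {m : ℕ} (hm : 0 < m) {S : Set V} {x : V} (hx : x ∈ S) :
    mycRho m hm S x = mycS1 m hm x := by simp [mycRho, hx]

lemma mycRho_of_not_mem {m : ℕ} (hm : 0 < m) {S : Set V} {x : V} (hx : x ∉ S) :
    mycRho m hm S x = mycS0 m x := by simp [mycRho, hx]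

lemma mycRho_injective (m : ℕ) (hm : 0 < m) (S : Set V) :
    Function.Injective (mycRho m hm S) := by
  intro a b h
  unfold mycRho mycS0 mycS1 at h
  split_ifs at h <;> simp [Fin.ext_iff] at h <;> exact h

/-- The orientation of `G` induced on the representatives determined by an
independent set `S`. -/
noncomputable def mycInduced {G : SimpleGraph V} {m : ℕ} (hm : 0 < m) (S : Set V)
    (hS : ∀ a ∈ S, ∀ b ∈ S, ¬ G.Adj a b) (D : Orient (genMycielski G m)) : Orient G where
  dir a b := D.dir (mycRho m hm S a) (mycRho m hm S b)
  dir_adj a b h := by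
    have hadj := D.dir_adj _ _ h
    unfold mycRho mycS0 mycS1 at hadj
    split_ifs at hadj <;> exact (genMycielski_adj_some.mp hadj).1
  adj_dir a b h := by
    refine D.adj_dir _ _ ?_
    by_cases ha : a ∈ S <;> by_cases hb : b ∈ S
    · exact absurd h (hS a ha b hb)
    · rw [mycRho_of_mem hm ha, mycRho_of_not_mem hm hb]
      exact genMycielski_adj_some.mpr ⟨h, Or.inr (Or.inr rfl)⟩
    · rw [mycRho_of_not_mem hm ha, mycRho_of_mem hm hb]
      exact genMycielski_adj_some.mpr ⟨h, Or.inr (Or.inl rfl)⟩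
    · rw [mycRho_of_not_mem hm ha, mycRho_of_not_mem hm hb]
      exact genMycielski_adj_some.mpr ⟨h, Or.inl ⟨rfl, rfl⟩⟩
  asymm a b h h' := D.asymm _ _ h h'

/-- The set of dependent arcs of an orientation, as a set of pairs. -/
def depSet {G : SimpleGraph V} (D : Orient G) : Set (V × V) :=
  {p | DependentArc D.dir p.1 p.2}

lemma numDependent_eq_ncard_depSet {G : SimpleGraph V} (D : Orient G) :
    numDependent D = (depSet D).ncard := rfl

section MainSets

variable {G : SimpleGraph V} {m : ℕ}

/-- Dependent arcs of `D` joining two level-0 vertices. -/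
def lowSet (D : Orient (genMycielski G m)) : Set ((Option (Fin (m + 1) × V)) × (Option (Fin (m + 1) × V))) :=
  {p | p ∈ depSet D ∧ ∃ a b : V, p.1 = mycS0 m a ∧ p.2 = mycS0 m b}

/-- The remaining dependent arcs of `D`. -/
def uppSet (D : Orient (genMycielski G m)) : Set ((Option (Fin (m + 1) × V)) × (Option (Fin (m + 1) × V))) :=
  depSet D \ lowSet D

/-- Pairs of vertices lying in the image of `mycRho`. -/
def regionSet (m : ℕ) (hm : 0 < m) (S : Set V) :
    Set ((Option (Fin (m + 1) × V)) × (Option (Fin (m + 1) × V))) :=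
  {p | (∃ x, mycRho m hm S x = p.1) ∧ ∃ y, mycRho m hm S y = p.2}

/-- Low dependent arcs hit by the set `S`. -/
def hitSet (D : Orient (genMycielski G m)) (S : Set V) :
    Set ((Option (Fin (m + 1) × V)) × (Option (Fin (m + 1) × V))) :=
  {p | p ∈ lowSet D ∧ ((∃ a ∈ S, p.1 = mycS0 m a) ∨ (∃ a ∈ S, p.2 = mycS0 m a))}

variable [Fintype V]

/-- Key principle: for any independent set `S`, the dependent arcs of `D` within
the region of `S`-representatives number at least `dmin G`. -/
lemma myc_principle (hm : 0 < m) (D : Orient (genMycielski G m))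
    (hac : IsAcyclicRel D.dir) (S : Set V) (hS : ∀ a ∈ S, ∀ b ∈ S, ¬ G.Adj a b) :
    dmin G ≤ (depSet D ∩ regionSet m hm S).ncard := by
  set R := mycInduced hm S hS D with hR
  have hdirR : ∀ x y, R.dir x y → D.dir (mycRho m hm S x) (mycRho m hm S y) :=
    fun x y h => h
  have hRac : IsAcyclicRel R.dir := by
    intro a b hab hrtg
    exact hac _ _ (hdirR _ _ hab)
      (Relation.ReflTransGen.lift (mycRho m hm S) hdirR _ _ hrtg)
  have hle : dmin G ≤ numDependent R := Nat.sInf_le ⟨R, hRac, rfl⟩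
  refine hle.trans ?_
  rw [numDependent_eq_ncard_depSet]
  refine Set.ncard_le_ncard_of_injOn
    (fun p => (mycRho m hm S p.1, mycRho m hm S p.2)) ?_ ?_ (Set.toFinite _)
  · rintro ⟨a, b⟩ hp
    exact ⟨depTransfer (mycRho_injective m hm S) hdirR hp, ⟨a, rfl⟩, ⟨b, rfl⟩⟩
  · intro p hp q hq hpq
    have h1 := congrArg Prod.fst hpq
    have h2 := congrArg Prod.snd hpq
    exact Prod.ext (mycRho_injective m hm S h1) (mycRho_injective m hm S h2)

lemma myc_split (hm : 0 < m) (D : Orient (genMycielski G m)) (S : Set V) :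
    depSet D ∩ regionSet m hm S ⊆ (lowSet D \ hitSet D S) ∪ (uppSet D ∩ regionSet m hm S) := by
  rintro p ⟨hdep, ⟨x, hx⟩, ⟨y, hy⟩⟩
  by_cases hxS : x ∈ S
  · refine Or.inr ⟨⟨hdep, ?_⟩, ⟨x, hx⟩, ⟨y, hy⟩⟩
    rintro ⟨-, a, b, ha, hb⟩
    rw [mycRho_of_mem hm hxS] at hx
    exact mycS1_ne_mycS0 hm x a (hx.trans ha)
  · by_cases hyS : y ∈ S
    · refine Or.inr ⟨⟨hdep, ?_⟩, ⟨x, hx⟩, ⟨y, hy⟩⟩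
      rintro ⟨-, a, b, ha, hb⟩
      rw [mycRho_of_mem hm hyS] at hy
      exact mycS1_ne_mycS0 hm y b (hy.trans hb)
    · rw [mycRho_of_not_mem hm hxS] at hx
      rw [mycRho_of_not_mem hm hyS] at hy
      refine Or.inl ⟨⟨hdep, x, y, hx.symm, hy.symm⟩, ?_⟩
      rintro ⟨-, ⟨a, haS, ha⟩ | ⟨a, haS, ha⟩⟩
      · exact hxS (mycS0_injective m (hx.trans ha) ▸ haS)
      · exact hyS (mycS0_injective m (hy.trans ha) ▸ haS)

/-- The counting consequence of the principle. -/
lemma myc_key (hm : 0 < m) (D : Orient (genMycielski G m))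
    (hac : IsAcyclicRel D.dir) (S : Set V) (hS : ∀ a ∈ S, ∀ b ∈ S, ¬ G.Adj a b) :
    (hitSet D S).ncard ≤ (lowSet D).ncard - dmin G + (uppSet D ∩ regionSet m hm S).ncard := by
  have hsub : hitSet D S ⊆ lowSet D := fun p hp => hp.1
  have h1 := (myc_principle hm D hac S hS).trans
    ((Set.ncard_le_ncard (myc_split hm D S) (Set.toFinite _)).trans
      (Set.ncard_union_le _ _))
  have h2 : (lowSet D \ hitSet D S).ncard = (lowSet D).ncard - (hitSet D S).ncard :=
    Set.ncard_diff hsub (Set.toFinite _)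
  have h3 : (hitSet D S).ncard ≤ (lowSet D).ncard :=
    Set.ncard_le_ncard hsub (Set.toFinite _)
  omega

lemma myc_dmin_le_low (hm : 0 < m) (D : Orient (genMycielski G m))
    (hac : IsAcyclicRel D.dir) : dmin G ≤ (lowSet D).ncard := by
  refine (myc_principle hm D hac ∅ (by simp)).trans
    (Set.ncard_le_ncard ?_ (Set.toFinite _))
  rintro p ⟨hdep, ⟨x, hx⟩, ⟨y, hy⟩⟩
  rw [mycRho_of_not_mem hm (Set.notMem_empty x)] at hx
  rw [mycRho_of_not_mem hm (Set.notMem_empty y)] at hy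
  exact ⟨hdep, x, y, hx.symm, hy.symm⟩

end MainSets

end AuxMachinery

theorem dmin_genMycielski_ge_add_two [Fintype V] (G : SimpleGraph V)
    (htf : G.CliqueFree 3) (h2 : 2 ≤ G.edgeSet.ncard) (h1 : 1 ≤ dmin G)
    (m : ℕ) (hm : 0 < m) :
    dmin G + 2 ≤ dmin (genMycielski G m) := by
  classical
  obtain ⟨D₀, hD₀⟩ := exists_acyclicOrient (genMycielski G m)
  have hne : {n | ∃ D : Orient (genMycielski G m),
      IsAcyclicRel D.dir ∧ numDependent D = n}.Nonempty := ⟨numDependent D₀, D₀, hD₀, rfl⟩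
  obtain ⟨D, hac, hnum⟩ := Nat.sInf_mem hne
  have main : dmin G + 2 ≤ numDependent D := by
    have htot : numDependent D = (lowSet D).ncard + (uppSet D).ncard := by
      rw [numDependent_eq_ncard_depSet]
      have hu : depSet D = lowSet D ∪ uppSet D :=
        (Set.union_diff_cancel (fun p hp => hp.1)).symm
      rw [hu]
      exact Set.ncard_union_eq Set.disjoint_sdiff_right (Set.toFinite _) (Set.toFinite _)
    have hL : dmin G ≤ (lowSet D).ncard := myc_dmin_le_low hm D hac
    by_contra hcon
    push_neg at hcon
    have hU1 : (uppSet D).ncard ≤ 1 := by omega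
    have hlow_ne : (lowSet D).Nonempty :=
      Set.nonempty_of_ncard_ne_zero (by omega)
    obtain ⟨p₁, hp₁⟩ := hlow_ne
    obtain ⟨hp₁dep, a, b, ha1, hb1⟩ := hp₁
    have hp₁low : p₁ ∈ lowSet D := ⟨hp₁dep, a, b, ha1, hb1⟩
    have hGab : G.Adj a b := by
      have hd := hp₁dep.1
      rw [ha1, hb1] at hd
      exact (genMycielski_adj_some.mp (D.dir_adj _ _ hd)).1
    have hab : a ≠ b := hGab.ne
    have hmemhit : ∀ (S : Set V) (p : _ × _) (c d : V), p ∈ lowSet D →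
        p.1 = mycS0 m c → p.2 = mycS0 m d → (c ∈ S ∨ d ∈ S) → p ∈ hitSet D S := by
      rintro S p c d hp hc hd (h | h)
      · exact ⟨hp, Or.inl ⟨c, h, hc⟩⟩
      · exact ⟨hp, Or.inr ⟨d, h, hd⟩⟩
    have hsing : ∀ v : V, ∀ x ∈ ({v} : Set V), ∀ y ∈ ({v} : Set V), ¬ G.Adj x y := by
      rintro v x hx y hy
      rw [Set.mem_singleton_iff] at hx hy
      subst hx; subst hy
      exact G.loopless.irrefl _
    rcases Nat.le_one_iff_eq_zero_or_eq_one.mp hU1 with hU0 | hU1'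
    · -- Case: no upper dependent arcs
      have hupp : uppSet D = ∅ := (Set.ncard_eq_zero (Set.toFinite _)).mp hU0
      have hkey0 : ∀ (S : Set V), (∀ x ∈ S, ∀ y ∈ S, ¬ G.Adj x y) →
          (hitSet D S).ncard ≤ (lowSet D).ncard - dmin G := by
        intro S hS
        have hk := myc_key hm D hac S hS
        rw [hupp] at hk
        simpa using hk
      have h1a : 1 ≤ (hitSet D ({a} : Set V)).ncard :=
        (Set.ncard_pos (Set.toFinite _)).mpr
          ⟨p₁, hmemhit _ _ a b hp₁low ha1 hb1 (Or.inl rfl)⟩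
      have hLa : dmin G + 1 ≤ (lowSet D).ncard := by
        have := hkey0 {a} (hsing a)
        omega
      have hexists2 : ∃ p₂ ∈ lowSet D, p₂ ≠ p₁ := by
        obtain ⟨q₁, hq₁, q₂, hq₂, hqne⟩ :=
          (Set.one_lt_ncard (Set.toFinite _)).mp (by omega : 1 < (lowSet D).ncard)
        by_cases h : q₁ = p₁
        · exact ⟨q₂, hq₂, by rw [← h]; exact Ne.symm hqne⟩
        · exact ⟨q₁, hq₁, h⟩
      obtain ⟨p₂, hp₂low, hp₂ne⟩ := hexists2
      obtain ⟨hp₂dep, c, d, hc2, hd2⟩ := hp₂low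
      have hp₂low' : p₂ ∈ lowSet D := ⟨hp₂dep, c, d, hc2, hd2⟩
      have hGcd : G.Adj c d := by
        have hd' := hp₂dep.1
        rw [hc2, hd2] at hd'
        exact (genMycielski_adj_some.mp (D.dir_adj _ _ hd')).1
      have hpairind : ∀ x y : V, ¬ G.Adj x y →
          ∀ u ∈ ({x, y} : Set V), ∀ v ∈ ({x, y} : Set V), ¬ G.Adj u v := by
        intro x y hxy u hu v hv
        simp only [Set.mem_insert_iff, Set.mem_singleton_iff] at hu hv
        rcases hu with rfl | rfl <;> rcases hv with rfl | rfl
        · exact G.loopless.irrefl _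
        · exact hxy
        · exact fun h => hxy h.symm
        · exact G.loopless.irrefl _
      have hfound : ∃ S : Set V, (∀ x ∈ S, ∀ y ∈ S, ¬ G.Adj x y) ∧
          (a ∈ S ∨ b ∈ S) ∧ (c ∈ S ∨ d ∈ S) := by
        by_cases hac1 : a = c
        · exact ⟨{a}, hsing a, Or.inl rfl, Or.inl (Set.mem_singleton_iff.mpr hac1.symm)⟩
        · by_cases had1 : a = d
          · exact ⟨{a}, hsing a, Or.inl rfl, Or.inr (Set.mem_singleton_iff.mpr had1.symm)⟩
          · by_cases hbc1 : b = c
            · exact ⟨{b}, hsing b, Or.inr rfl, Or.inl (Set.mem_singleton_iff.mpr hbc1.symm)⟩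
            · by_cases hbd1 : b = d
              · exact ⟨{b}, hsing b, Or.inr rfl, Or.inr (Set.mem_singleton_iff.mpr hbd1.symm)⟩
              · by_cases hadj1 : G.Adj a c
                · by_cases hadj2 : G.Adj a d
                  · exact absurd
                      (SimpleGraph.is3Clique_triple_iff.mpr ⟨hadj1, hadj2, hGcd⟩)
                      (htf {a, c, d})
                  · exact ⟨{a, d}, hpairind a d hadj2, Or.inl (Set.mem_insert _ _),
                      Or.inr (Set.mem_insert_iff.mpr (Or.inr rfl))⟩
                · exact ⟨{a, c}, hpairind a c hadj1, Or.inl (Set.mem_insert _ _),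
                    Or.inl (Set.mem_insert_iff.mpr (Or.inr rfl))⟩
      obtain ⟨S, hSind, hhit1, hhit2⟩ := hfound
      have hsub2 : ({p₁, p₂} : Set _) ⊆ hitSet D S := by
        rintro p (rfl | rfl)
        · exact hmemhit S p a b hp₁low ha1 hb1 hhit1
        · exact hmemhit S p c d hp₂low' hc2 hd2 hhit2
      have h2le : 2 ≤ (hitSet D S).ncard := by
        calc 2 = ({p₁, p₂} : Set _).ncard := (Set.ncard_pair (Ne.symm hp₂ne)).symm
          _ ≤ _ := Set.ncard_le_ncard hsub2 (Set.toFinite _)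
      have := hkey0 S hSind
      omega
    · -- Case: exactly one upper dependent arc
      have hLd : (lowSet D).ncard = dmin G := by omega
      obtain ⟨z, hz⟩ := Set.ncard_eq_one.mp hU1'
      have hget : ∀ v : V, p₁ ∈ hitSet D ({v} : Set V) →
          z ∈ regionSet m hm ({v} : Set V) := by
        intro v hhit
        have hk := myc_key hm D hac {v} (hsing v)
        have h1v : 1 ≤ (hitSet D ({v} : Set V)).ncard :=
          (Set.ncard_pos (Set.toFinite _)).mpr ⟨p₁, hhit⟩
        have hUreg : 1 ≤ (uppSet D ∩ regionSet m hm ({v} : Set V)).ncard := by omega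
        obtain ⟨w, hw⟩ := (Set.ncard_pos (Set.toFinite _)).mp hUreg
        have hwz : w = z := by
          have hw1 := hw.1
          rw [hz] at hw1
          exact hw1
        exact hwz ▸ hw.2
      have hza := hget a (hmemhit _ _ a b hp₁low ha1 hb1 (Or.inl rfl))
      have hzb := hget b (hmemhit _ _ a b hp₁low ha1 hb1 (Or.inr rfl))
      have hzupp : z ∈ uppSet D := by
        rw [hz]; exact rfl
      obtain ⟨hzdep, hznlow⟩ := hzupp
      have hone : ∀ v : V, z ∈ regionSet m hm ({v} : Set V) →
          z.1 = mycS1 m hm v ∨ z.2 = mycS1 m hm v := by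
        rintro v ⟨⟨x, hx⟩, ⟨y, hy⟩⟩
        by_cases hxv : x ∈ ({v} : Set V)
        · rw [mycRho_of_mem hm hxv] at hx
          rw [Set.mem_singleton_iff] at hxv
          exact Or.inl (by rw [← hx, hxv])
        · by_cases hyv : y ∈ ({v} : Set V)
          · rw [mycRho_of_mem hm hyv] at hy
            rw [Set.mem_singleton_iff] at hyv
            exact Or.inr (by rw [← hy, hyv])
          · rw [mycRho_of_not_mem hm hxv] at hx
            rw [mycRho_of_not_mem hm hyv] at hy
            exact absurd ⟨hzdep, x, y, hx.symm, hy.symm⟩ hznlow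
      have hnadj11 : ∀ x y : V, ¬ D.dir (mycS1 m hm x) (mycS1 m hm y) := by
        intro x y hd
        have hadj := (genMycielski_adj_some.mp (D.dir_adj _ _ hd)).2
        rcases hadj with ⟨-, h0⟩ | h0 | h0 <;> simp at h0
      rcases hone a hza with h1a | h1a <;> rcases hone b hzb with h1b | h1b
      · exact hab (mycS1_injective m hm (h1a.symm.trans h1b))
      · exact hnadj11 a b (by rw [← h1a, ← h1b]; exact hzdep.1)
      · exact hnadj11 b a (by rw [← h1b, ← h1a]; exact hzdep.1)
      · exact hab (mycS1_injective m hm (h1a.symm.trans h1b))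
  exact main.trans_eq hnum
end

section
/- For any graph G and positive integer m, c(M_m(G)) ≤ ‖G‖, the number of edges of G. Moreover, if G is triangle-free, then c(M_m(G)) ≤ ‖G‖ − e₂(G), where e₂(G) is the maximum number of edges of a bipartite subgraph of G. -/
variable {V : Type*}

/-- `e₂(G)`: the maximum number of edges of a bipartite subgraph of `G`. -/
noncomputable def e2 (G : SimpleGraph V) : ℕ :=
  sSup {n | ∃ H : SimpleGraph V, H ≤ G ∧ H.Colorable 2 ∧ H.edgeSet.ncard = n}


private lemma acyclic_of_mono {α : Type*} {R : α → α → Prop} (g : α → ℚ)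
    (hmono : ∀ a b, R a b → g a < g b) : IsAcyclicRel R := by
  have key : ∀ p q, Relation.ReflTransGen R p q → g p ≤ g q := by
    intro p q h
    induction h with
    | refl => exact le_refl _
    | tail _ h2 ih => exact le_trans ih (hmono _ _ h2).le
  intro u v huv hvu
  exact absurd (hmono _ _ huv) (not_lt.mpr (key _ _ hvu))

private lemma nodep_generic {α : Type*} {R : α → α → Prop} (ρ : α → ℚ)
    (inc : ∀ a b, R a b → ρ a + 1/2 ≤ ρ b)
    (ex1 : ∀ a b, R a b → 1 ≤ ρ a → ρ b = ρ a + 1)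
    (ex2 : ∀ a b, R a b → 2 ≤ ρ b → ρ a + 1 = ρ b)
    (nonneg : ∀ a, 0 ≤ ρ a)
    {u v : α} (huv : R u v)
    (hA : (ρ u = 0 ∧ ρ v = 1/2) ∨ (1 ≤ ρ u ∧ ρ v = ρ u + 1)) :
    IsAcyclicRel (reverseArc R u v) := by
  classical
  have hune : u ≠ v := by
    intro h; have := inc _ _ huv; rw [h] at this; linarith
  apply acyclic_of_mono
    (fun x => if x = u then ρ v - 2/5 else if x = v then ρ v - 9/20 else ρ x)
  rintro x y (⟨hR, hne⟩ | ⟨hxv, hyu⟩)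
  · have hinc := inc _ _ hR
    have huvinc := inc _ _ huv
    have hxyne : x ≠ y := by intro h; rw [h] at hinc; linarith
    show (if x = u then ρ v - 2/5 else if x = v then ρ v - 9/20 else ρ x)
        < (if y = u then ρ v - 2/5 else if y = v then ρ v - 9/20 else ρ y)
    by_cases hxu : x = u
    · have hyv : y ≠ v := fun h => hne ⟨hxu, h⟩
      have hyu : y ≠ u := fun h => hxyne (hxu.trans h.symm)
      rw [if_pos hxu, if_neg hyu, if_neg hyv]
      rw [hxu] at hinc
      rcases hA with ⟨h1, h2⟩ | ⟨h1, h2⟩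
      · linarith
      · have := ex1 _ _ hR (by rw [hxu]; linarith)
        rw [hxu] at this; linarith
    · by_cases hyu : y = u
      · have hxv : x ≠ v := by
          intro h; rw [h, hyu] at hinc; linarith
        rw [if_neg hxu, if_neg hxv, if_pos hyu]
        rw [hyu] at hinc
        rcases hA with ⟨h1, h2⟩ | ⟨h1, h2⟩
        · linarith [nonneg x]
        · linarith
      · by_cases hyv : y = v
        · have hxv : x ≠ v := fun h => hxyne (h.trans hyv.symm)
          rw [if_neg hxu, if_neg hxv, if_neg hyu, if_pos hyv]
          rw [hyv] at hinc
          rcases hA with ⟨h1, h2⟩ | ⟨h1, h2⟩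
          · linarith [nonneg x]
          · have := ex2 _ _ hR (by rw [hyv]; linarith)
            rw [hyv] at this; linarith
        · by_cases hxv : x = v
          · rw [if_neg hxu, if_pos hxv, if_neg hyu, if_neg hyv]
            rw [hxv] at hinc
            linarith
          · rw [if_neg hxu, if_neg hxv, if_neg hyu, if_neg hyv]
            linarith
  · show (if x = u then ρ v - 2/5 else if x = v then ρ v - 9/20 else ρ x)
        < (if y = u then ρ v - 2/5 else if y = v then ρ v - 9/20 else ρ y)
    have hxu : x ≠ u := by rw [hxv]; exact fun h => hune h.symm
    rw [if_neg hxu, if_pos hxv, if_pos hyu]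
    linarith

private def rho (m : ℕ) (c : V → Fin 2) : Option (Fin (m + 1) × V) → ℚ
  | none => (m : ℚ) + 1
  | some p => if (p.1 : ℕ) = 0 then (if c p.2 = 0 then 0 else 1/2) else ((p.1 : ℕ) : ℚ)

private lemma rho_nonneg (m : ℕ) (c : V → Fin 2) (x : Option (Fin (m + 1) × V)) :
    0 ≤ rho m c x := by
  cases x with
  | none => simp [rho]; positivity
  | some p =>
      simp only [rho]
      split_ifs <;> norm_num

private lemma rho_some_le (m : ℕ) (c : V → Fin 2) (hm : 0 < m) (i : Fin (m + 1)) (a : V) :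
    rho m c (some (i, a)) ≤ (m : ℚ) := by
  have h1 : (1 : ℚ) ≤ (m : ℚ) := by exact_mod_cast hm
  have h2 : ((i : ℕ) : ℚ) ≤ (m : ℚ) := by exact_mod_cast Fin.is_le i
  simp only [rho]
  split_ifs <;> linarith

private lemma rho_lvl_lt (m : ℕ) (c : V → Fin 2) (i j : Fin (m + 1)) (a b : V)
    (h : (i : ℕ) < (j : ℕ)) :
    rho m c (some (i, a)) < rho m c (some (j, b)) := by
  have hj : (j : ℕ) ≠ 0 := by omega
  have h1 : (1 : ℚ) ≤ ((j : ℕ) : ℚ) := by exact_mod_cast Nat.one_le_iff_ne_zero.mpr hj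
  simp only [rho, if_neg hj]
  split_ifs with h0 h2
  · linarith
  · linarith
  · exact_mod_cast h



private def myF (G H : SimpleGraph V) (m : ℕ) : Set (Sym2 (Option (Fin (m + 1) × V))) :=
  Sym2.map (fun a => (some ((0 : Fin (m + 1)), a) : Option (Fin (m + 1) × V))) ''
    (G.edgeSet \ H.edgeSet)

private def dirr (G H : SimpleGraph V) (m : ℕ) (c : V → Fin 2)
    (x y : Option (Fin (m + 1) × V)) : Prop :=
  ((genMycielski G m).deleteEdges (myF G H m)).Adj x y ∧ rho m c x < rho m c y

private lemma sne {m : ℕ} (p q : Fin (m + 1)) (a b : V) (hpq : (p : ℕ) ≠ (q : ℕ)) :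
    (some (p, a) : Option (Fin (m + 1) × V)) ≠ some (q, b) := by
  intro h
  injection h with h'
  exact hpq (congrArg Fin.val (congrArg Prod.fst h'))

private lemma lvl0_Hadj {G H : SimpleGraph V} {m : ℕ} {i j : Fin (m + 1)} {a b : V}
    (hab : G.Adj a b) (hi0 : (i : ℕ) = 0) (hj0 : (j : ℕ) = 0)
    (hnF : s(some (i, a), some (j, b)) ∉ myF G H m) : H.Adj a b := by
  by_contra hnH
  apply hnF
  simp only [myF, Set.mem_image]
  refine ⟨s(a, b), ⟨(SimpleGraph.mem_edgeSet G).mpr hab,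
    fun hmem => hnH ((SimpleGraph.mem_edgeSet H).mp hmem)⟩, ?_⟩
  have hi : i = 0 := Fin.ext (by simpa using hi0)
  have hj : j = 0 := Fin.ext (by simpa using hj0)
  rw [Sym2.map_pair_eq, hi, hj]

private lemma dirr_cases {G H : SimpleGraph V} {m : ℕ} {c : V → Fin 2} (hm : 0 < m)
    {x y : Option (Fin (m + 1) × V)} (h : dirr G H m c x y) :
    (∃ (i j : Fin (m + 1)) (a b : V), x = some (i, a) ∧ y = some (j, b) ∧
      (i : ℕ) = 0 ∧ (j : ℕ) = 0 ∧ H.Adj a b ∧ c a = 0 ∧ c b ≠ 0) ∨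
    (∃ (i j : Fin (m + 1)) (a b : V), x = some (i, a) ∧ y = some (j, b) ∧
      (i : ℕ) + 1 = (j : ℕ) ∧ G.Adj a b) ∨
    (∃ (i : Fin (m + 1)) (a : V), x = some (i, a) ∧ (i : ℕ) = m ∧ y = none) := by
  obtain ⟨hadj, hlt⟩ := h
  rw [SimpleGraph.deleteEdges_adj] at hadj
  obtain ⟨hadj, hnF⟩ := hadj
  rcases x with _ | ⟨i, a⟩
  · rcases y with _ | ⟨j, b⟩
    · exact hadj.elim
    · exfalso
      have h1 : rho m c (some (j, b)) ≤ (m : ℚ) := rho_some_le m c hm j b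
      have h2 : ((m : ℚ) + 1) < rho m c (some (j, b)) := hlt
      linarith
  · rcases y with _ | ⟨j, b⟩
    · exact Or.inr (Or.inr ⟨i, a, rfl, hadj, rfl⟩)
    · obtain ⟨hab, hcase⟩ := hadj
      rcases hcase with ⟨hij, hi0⟩ | hij | hij
      · have hj0 : (j : ℕ) = 0 := by rw [← hij]; exact hi0
        have hHab : H.Adj a b := lvl0_Hadj hab hi0 hj0 hnF
        have hra : rho m c (some (i, a)) = if c a = 0 then (0 : ℚ) else 1/2 := by
          simp [rho, hi0]
        have hrb : rho m c (some (j, b)) = if c b = 0 then (0 : ℚ) else 1/2 := by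
          simp [rho, hj0]
        rw [hra, hrb] at hlt
        refine Or.inl ⟨i, j, a, b, rfl, rfl, hi0, hj0, hHab, ?_, ?_⟩
        · by_contra hca
          rw [if_neg hca] at hlt
          split_ifs at hlt <;> linarith
        · intro hcb
          rw [if_pos hcb] at hlt
          split_ifs at hlt <;> linarith
      · exact Or.inr (Or.inl ⟨i, j, a, b, rfl, rfl, hij, hab⟩)
      · exact absurd hlt (not_lt.mpr (rho_lvl_lt m c j i b a (by omega)).le)

private lemma dirr_inc {G H : SimpleGraph V} {m : ℕ} {c : V → Fin 2} (hm : 0 < m)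
    {x y : Option (Fin (m + 1) × V)} (h : dirr G H m c x y) :
    rho m c x + 1/2 ≤ rho m c y ∧ (1 ≤ rho m c x → rho m c y = rho m c x + 1) ∧
      (2 ≤ rho m c y → rho m c x + 1 = rho m c y) := by
  rcases dirr_cases hm h with ⟨i, j, a, b, rfl, rfl, hi0, hj0, hH, hca, hcb⟩ |
    ⟨i, j, a, b, rfl, rfl, hij, hab⟩ | ⟨i, a, rfl, him, rfl⟩
  · have hra : rho m c (some (i, a)) = 0 := by simp [rho, hi0, hca]
    have hrb : rho m c (some (j, b)) = 1/2 := by simp [rho, hj0, hcb]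
    rw [hra, hrb]
    refine ⟨by norm_num, fun h' => by linarith, fun h' => by linarith⟩
  · by_cases h0 : (i : ℕ) = 0
    · have hj1 : (j : ℕ) = 1 := by omega
      have hrb : rho m c (some (j, b)) = 1 := by
        have hne : (j : ℕ) ≠ 0 := by omega
        simp [rho, hne, hj1]
      have hra : rho m c (some (i, a)) = 0 ∨ rho m c (some (i, a)) = 1/2 := by
        by_cases hca : c a = 0
        · exact Or.inl (by simp [rho, h0, hca])
        · exact Or.inr (by simp [rho, h0, hca])
      rcases hra with h' | h' <;> rw [h', hrb] <;>
        exact ⟨by norm_num, fun hh => by linarith, fun hh => by linarith⟩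
    · have hra : rho m c (some (i, a)) = ((i : ℕ) : ℚ) := by simp [rho, h0]
      have hj0' : (j : ℕ) ≠ 0 := by omega
      have hrb : rho m c (some (j, b)) = ((j : ℕ) : ℚ) := by simp [rho, hj0']
      have hcast : ((j : ℕ) : ℚ) = ((i : ℕ) : ℚ) + 1 := by exact_mod_cast hij.symm
      rw [hra, hrb, hcast]
      refine ⟨by linarith, fun _ => rfl, fun _ => rfl⟩
  · have hi0' : (i : ℕ) ≠ 0 := by omega
    have hra : rho m c (some (i, a)) = ((i : ℕ) : ℚ) := by simp [rho, hi0']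
    have hrb : rho m c (none : Option (Fin (m + 1) × V)) = (m : ℚ) + 1 := rfl
    have hcast : ((i : ℕ) : ℚ) = (m : ℚ) := by exact_mod_cast him
    rw [hra, hrb, hcast]
    have h1 : (1 : ℚ) ≤ (m : ℚ) := by exact_mod_cast hm
    refine ⟨by linarith, fun _ => rfl, fun _ => rfl⟩

private lemma dirr_total {G H : SimpleGraph V} {m : ℕ} {c : V → Fin 2} (hm : 0 < m)
    (hc : ∀ a b, H.Adj a b → c a ≠ c b) {x y : Option (Fin (m + 1) × V)}
    (h : ((genMycielski G m).deleteEdges (myF G H m)).Adj x y) :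
    dirr G H m c x y ∨ dirr G H m c y x := by
  have hne : rho m c x ≠ rho m c y := by
    have h' := h
    rw [SimpleGraph.deleteEdges_adj] at h'
    obtain ⟨hadj, hnF⟩ := h'
    rcases x with _ | ⟨i, a⟩
    · rcases y with _ | ⟨j, b⟩
      · exact hadj.elim
      · have h1 : rho m c (some (j, b)) ≤ (m : ℚ) := rho_some_le m c hm j b
        have h2 : rho m c (none : Option (Fin (m + 1) × V)) = (m : ℚ) + 1 := rfl
        rw [h2]; intro heq; linarith
    · rcases y with _ | ⟨j, b⟩
      · have h1 : rho m c (some (i, a)) ≤ (m : ℚ) := rho_some_le m c hm i a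
        have h2 : rho m c (none : Option (Fin (m + 1) × V)) = (m : ℚ) + 1 := rfl
        rw [h2]; intro heq; linarith
      · obtain ⟨hab, hcase⟩ := hadj
        rcases hcase with ⟨hij, hi0⟩ | hij | hij
        · have hj0 : (j : ℕ) = 0 := by rw [← hij]; exact hi0
          have hHab : H.Adj a b := lvl0_Hadj hab hi0 hj0 hnF
          have hcab := hc a b hHab
          have hra : rho m c (some (i, a)) = if c a = 0 then (0 : ℚ) else 1/2 := by
            simp [rho, hi0]
          have hrb : rho m c (some (j, b)) = if c b = 0 then (0 : ℚ) else 1/2 := by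
            simp [rho, hj0]
          rw [hra, hrb]
          have fin2 : ∀ z : Fin 2, z ≠ 0 → z = 1 := by decide
          by_cases hca : c a = 0 <;> by_cases hcb : c b = 0
          · exact absurd (hca.trans hcb.symm) hcab
          · rw [if_pos hca, if_neg hcb]; norm_num
          · rw [if_neg hca, if_pos hcb]; norm_num
          · exact absurd ((fin2 _ hca).trans (fin2 _ hcb).symm) hcab
        · exact (rho_lvl_lt m c i j a b (by omega)).ne
        · exact (rho_lvl_lt m c j i b a (by omega)).ne'
  rcases lt_or_gt_of_ne hne with h' | h'
  · exact Or.inl ⟨h, h'⟩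
  · exact Or.inr ⟨h.symm, h'⟩

open Classical in
private noncomputable def bumpf (G : SimpleGraph V) (m : ℕ) (c : V → Fin 2) (b0 : V) :
    Option (Fin (m + 1) × V) → ℚ := fun x =>
  match x with
  | none => 0
  | some p => if (p.1 : ℕ) = 0 ∧ ¬ c p.2 = 0 ∧ ¬ G.Adj p.2 b0 then 1/8 else 0

private lemma bumpf_none (G : SimpleGraph V) (m : ℕ) (c : V → Fin 2) (b0 : V) :
    bumpf G m c b0 none = 0 := rfl

open Classical in
private lemma bumpf_some (G : SimpleGraph V) (m : ℕ) (c : V → Fin 2) (b0 : V)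
    (k : Fin (m + 1)) (d : V) :
    bumpf G m c b0 (some (k, d)) =
      if (k : ℕ) = 0 ∧ ¬ c d = 0 ∧ ¬ G.Adj d b0 then 1/8 else 0 := rfl

private lemma bumpf_nonneg (G : SimpleGraph V) (m : ℕ) (c : V → Fin 2) (b0 : V)
    (x : Option (Fin (m + 1) × V)) : 0 ≤ bumpf G m c b0 x := by
  rcases x with _ | ⟨k, d⟩
  · rw [bumpf_none]
  · rw [bumpf_some]; split_ifs <;> norm_num

private lemma bumpf_le (G : SimpleGraph V) (m : ℕ) (c : V → Fin 2) (b0 : V)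
    (x : Option (Fin (m + 1) × V)) : bumpf G m c b0 x ≤ 1/8 := by
  rcases x with _ | ⟨k, d⟩
  · rw [bumpf_none]; norm_num
  · rw [bumpf_some]; split_ifs <;> norm_num

private lemma dirr_nodep_B {G H : SimpleGraph V} {m : ℕ} {c : V → Fin 2}
    (hm : 0 < m)
    (noTri : ∀ a b d, G.Adj a b → H.Adj a d → ¬ G.Adj d b)
    {i j : Fin (m + 1)} {a0 b0 : V} (hi0 : (i : ℕ) = 0) (hj1 : (j : ℕ) = 1)
    (hab : G.Adj a0 b0) :
    IsAcyclicRel (reverseArc (dirr G H m c) (some (i, a0)) (some (j, b0))) := by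
  classical
  apply acyclic_of_mono (fun x => if x = some (i, a0) then (3/5 : ℚ)
    else if x = some (j, b0) then 11/20 else rho m c x + bumpf G m c b0 x)
  rintro x y (⟨hR, hne⟩ | ⟨hxv, hyu⟩)
  · show (if x = some (i, a0) then (3/5 : ℚ) else if x = some (j, b0) then 11/20
        else rho m c x + bumpf G m c b0 x)
      < (if y = some (i, a0) then (3/5 : ℚ) else if y = some (j, b0) then 11/20
        else rho m c y + bumpf G m c b0 y)
    rcases dirr_cases hm hR with ⟨i', j', a, b, rfl, rfl, hi0', hj0', hH', hca', hcb'⟩ |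
      ⟨i', j', a, b, rfl, rfl, hij', hab'⟩ | ⟨i', a, rfl, him', rfl⟩
    · -- kind 1 : level-0 H-edge
      have hyv : (some (j', b) : Option (Fin (m + 1) × V)) ≠ some (j, b0) :=
        sne j' j b b0 (by omega)
      by_cases hxu : (some (i', a) : Option (Fin (m + 1) × V)) = some (i, a0)
      · have ha : a = a0 := by
          injection hxu with h'; exact congrArg Prod.snd h'
        have hyu : (some (j', b) : Option (Fin (m + 1) × V)) ≠ some (i, a0) := by
          intro h
          injection h with h'
          have hb : b = a0 := congrArg Prod.snd h'
          apply hcb'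
          rw [hb, ← ha, hca']
        rw [if_pos hxu, if_neg hyu, if_neg hyv]
        have hGb : ¬ G.Adj b b0 := noTri a0 b0 b hab (ha ▸ hH')
        have hρy : rho m c (some (j', b)) = 1/2 := by simp [rho, hj0', hcb']
        have hby : bumpf G m c b0 (some (j', b)) = 1/8 := by
          rw [bumpf_some, if_pos ⟨hj0', hcb', hGb⟩]
        rw [hρy, hby]; norm_num
      · have hxv : (some (i', a) : Option (Fin (m + 1) × V)) ≠ some (j, b0) :=
          sne _ _ _ _ (by omega)
        have hρx : rho m c (some (i', a)) = 0 := by simp [rho, hi0', hca']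
        have hbx : bumpf G m c b0 (some (i', a)) = 0 := by
          rw [bumpf_some, if_neg (by simp [hca'])]
        by_cases hyu : (some (j', b) : Option (Fin (m + 1) × V)) = some (i, a0)
        · rw [if_neg hxu, if_neg hxv, if_pos hyu, hρx, hbx]; norm_num
        · rw [if_neg hxu, if_neg hxv, if_neg hyu, if_neg hyv, hρx, hbx]
          have hρy : rho m c (some (j', b)) = 1/2 := by simp [rho, hj0', hcb']
          rw [hρy]
          linarith [bumpf_nonneg G m c b0 (some (j', b))]
    · -- kind 2 : upward cross edge
      by_cases hyv : (some (j', b) : Option (Fin (m + 1) × V)) = some (j, b0)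
      · have h' : j' = j ∧ b = b0 := by simpa using hyv
        have hb : b = b0 := h'.2
        have hj'1 : (j' : ℕ) = 1 := by rw [h'.1]; exact hj1
        have hi'0 : (i' : ℕ) = 0 := by omega
        have hxu : (some (i', a) : Option (Fin (m + 1) × V)) ≠ some (i, a0) :=
          fun h => hne ⟨h, hyv⟩
        have hxv : (some (i', a) : Option (Fin (m + 1) × V)) ≠ some (j, b0) :=
          sne i' j a b0 (by omega)
        have hyu : (some (j', b) : Option (Fin (m + 1) × V)) ≠ some (i, a0) :=
          sne j' i b a0 (by omega)
        rw [if_neg hxu, if_neg hxv, if_neg hyu, if_pos hyv]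
        have hbx : bumpf G m c b0 (some (i', a)) = 0 := by
          rw [bumpf_some, if_neg (fun hcontra => hcontra.2.2 (hb ▸ hab'))]
        have hρx : rho m c (some (i', a)) ≤ 1/2 := by
          simp only [rho, if_pos hi'0]
          split_ifs <;> norm_num
        rw [hbx]; linarith
      · have hyu : (some (j', b) : Option (Fin (m + 1) × V)) ≠ some (i, a0) :=
          sne j' i b a0 (by omega)
        by_cases hxu : (some (i', a) : Option (Fin (m + 1) × V)) = some (i, a0)
        · have h' : i' = i ∧ a = a0 := by simpa using hxu
          have hi'0 : (i' : ℕ) = 0 := by rw [h'.1]; exact hi0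
          have hj'1 : (j' : ℕ) = 1 := by omega
          rw [if_pos hxu, if_neg hyu, if_neg hyv]
          have hρy : rho m c (some (j', b)) = 1 := by
            have hne' : (j' : ℕ) ≠ 0 := by omega
            simp [rho, hne', hj'1]
          have hby : bumpf G m c b0 (some (j', b)) = 0 := by
            rw [bumpf_some, if_neg (by simp [hj'1])]
          rw [hρy, hby]; norm_num
        · by_cases hxv : (some (i', a) : Option (Fin (m + 1) × V)) = some (j, b0)
          · have h' : i' = j ∧ a = b0 := by simpa using hxv
            have hi'1 : (i' : ℕ) = 1 := by rw [h'.1]; exact hj1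
            have hj'2 : (j' : ℕ) = 2 := by omega
            rw [if_neg hxu, if_pos hxv, if_neg hyu, if_neg hyv]
            have hρy : rho m c (some (j', b)) = 2 := by
              have hne' : (j' : ℕ) ≠ 0 := by omega
              simp [rho, hne', hj'2]
            have hby : bumpf G m c b0 (some (j', b)) = 0 := by
              rw [bumpf_some, if_neg (by simp [hj'2])]
            rw [hρy, hby]; norm_num
          · rw [if_neg hxu, if_neg hxv, if_neg hyu, if_neg hyv]
            by_cases hi'0 : (i' : ℕ) = 0
            · have hj'1 : (j' : ℕ) = 1 := by omega
              have hρy : rho m c (some (j', b)) = 1 := by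
                have hne' : (j' : ℕ) ≠ 0 := by omega
                simp [rho, hne', hj'1]
              have hby : bumpf G m c b0 (some (j', b)) = 0 := by
                rw [bumpf_some, if_neg (by simp [hj'1])]
              have hρx : rho m c (some (i', a)) ≤ 1/2 := by
                simp only [rho, if_pos hi'0]
                split_ifs <;> norm_num
              rw [hρy, hby]
              linarith [bumpf_le G m c b0 (some (i', a))]
            · have hρx : rho m c (some (i', a)) = ((i' : ℕ) : ℚ) := by simp [rho, hi'0]
              have hj'ne : (j' : ℕ) ≠ 0 := by omega
              have hρy : rho m c (some (j', b)) = ((j' : ℕ) : ℚ) := by simp [rho, hj'ne]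
              have hbx : bumpf G m c b0 (some (i', a)) = 0 := by
                rw [bumpf_some, if_neg (by simp [hi'0])]
              have hby : bumpf G m c b0 (some (j', b)) = 0 := by
                rw [bumpf_some, if_neg (by simp [hj'ne])]
              rw [hρx, hρy, hbx, hby]
              have hcast : ((j' : ℕ) : ℚ) = ((i' : ℕ) : ℚ) + 1 := by exact_mod_cast hij'.symm
              linarith
    · -- kind 3 : apex edge
      have hyu : (none : Option (Fin (m + 1) × V)) ≠ some (i, a0) := by simp
      have hyv : (none : Option (Fin (m + 1) × V)) ≠ some (j, b0) := by simp
      have hρy : rho m c (none : Option (Fin (m + 1) × V)) = (m : ℚ) + 1 := rfl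
      have h1m : (1 : ℚ) ≤ (m : ℚ) := by exact_mod_cast hm
      have hxu : (some (i', a) : Option (Fin (m + 1) × V)) ≠ some (i, a0) :=
        sne i' i a a0 (by omega)
      by_cases hxv : (some (i', a) : Option (Fin (m + 1) × V)) = some (j, b0)
      · rw [if_neg hxu, if_pos hxv, if_neg hyu, if_neg hyv, hρy, bumpf_none]
        linarith
      · rw [if_neg hxu, if_neg hxv, if_neg hyu, if_neg hyv, hρy, bumpf_none]
        have hi'ne : (i' : ℕ) ≠ 0 := by omega
        have hρx : rho m c (some (i', a)) = ((i' : ℕ) : ℚ) := by simp [rho, hi'ne]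
        have hbx : bumpf G m c b0 (some (i', a)) = 0 := by
          rw [bumpf_some, if_neg (by simp [hi'ne])]
        have hcast : ((i' : ℕ) : ℚ) = (m : ℚ) := by exact_mod_cast him'
        rw [hρx, hbx, hcast]
        linarith
  · show (if x = some (i, a0) then (3/5 : ℚ) else if x = some (j, b0) then 11/20
        else rho m c x + bumpf G m c b0 x)
      < (if y = some (i, a0) then (3/5 : ℚ) else if y = some (j, b0) then 11/20
        else rho m c y + bumpf G m c b0 y)
    rw [hxv, hyu]
    have hvu : (some (j, b0) : Option (Fin (m + 1) × V)) ≠ some (i, a0) :=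
      sne j i b0 a0 (by omega)
    rw [if_neg hvu, if_pos rfl, if_pos rfl]
    norm_num

private lemma dirr_nodep {G H : SimpleGraph V} {m : ℕ} {c : V → Fin 2} (hm : 0 < m)
    (noTri : ∀ a b d, G.Adj a b → H.Adj a d → ¬ G.Adj d b)
    {u v : Option (Fin (m + 1) × V)} (huv : dirr G H m c u v) :
    IsAcyclicRel (reverseArc (dirr G H m c) u v) := by
  have inc : ∀ a b, dirr G H m c a b → rho m c a + 1/2 ≤ rho m c b :=
    fun a b h => (dirr_inc hm h).1
  have ex1 : ∀ a b, dirr G H m c a b → 1 ≤ rho m c a → rho m c b = rho m c a + 1 :=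
    fun a b h => (dirr_inc hm h).2.1
  have ex2 : ∀ a b, dirr G H m c a b → 2 ≤ rho m c b → rho m c a + 1 = rho m c b :=
    fun a b h => (dirr_inc hm h).2.2
  rcases dirr_cases hm huv with ⟨i, j, a0, b0, rfl, rfl, hi0, hj0, hH, hca, hcb⟩ |
    ⟨i, j, a0, b0, rfl, rfl, hij, hab⟩ | ⟨i, a0, rfl, him, rfl⟩
  · exact nodep_generic _ inc ex1 ex2 (rho_nonneg m c) huv
      (Or.inl ⟨by simp [rho, hi0, hca], by simp [rho, hj0, hcb]⟩)
  · by_cases h0 : (i : ℕ) = 0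
    · exact dirr_nodep_B hm noTri h0 (by omega) hab
    · have h1 : (1 : ℚ) ≤ ((i : ℕ) : ℚ) := by
        exact_mod_cast Nat.one_le_iff_ne_zero.mpr h0
      have hρu : rho m c (some (i, a0)) = ((i : ℕ) : ℚ) := by simp [rho, h0]
      have hjne : (j : ℕ) ≠ 0 := by omega
      have hρv : rho m c (some (j, b0)) = ((j : ℕ) : ℚ) := by simp [rho, hjne]
      refine nodep_generic _ inc ex1 ex2 (rho_nonneg m c) huv (Or.inr ⟨?_, ?_⟩)
      · rw [hρu]; exact h1
      · rw [hρu, hρv]; exact_mod_cast hij.symm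
  · have h1 : (1 : ℚ) ≤ (m : ℚ) := by exact_mod_cast hm
    have hine : (i : ℕ) ≠ 0 := by omega
    have hρu : rho m c (some (i, a0)) = ((i : ℕ) : ℚ) := by simp [rho, hine]
    have hcast : ((i : ℕ) : ℚ) = (m : ℚ) := by exact_mod_cast him
    refine nodep_generic _ inc ex1 ex2 (rho_nonneg m c) huv (Or.inr ⟨?_, ?_⟩)
    · rw [hρu, hcast]; exact h1
    · rw [hρu, hcast]; rfl

private lemma mycielski_bound [Fintype V] (G H : SimpleGraph V) (hHG : H ≤ G)
    (c : V → Fin 2) (hc : ∀ a b, H.Adj a b → c a ≠ c b)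
    (noTri : ∀ a b d, G.Adj a b → H.Adj a d → ¬ G.Adj d b)
    (m : ℕ) (hm : 0 < m) :
    coverDeletion (genMycielski G m) ≤ (G.edgeSet \ H.edgeSet).ncard := by
  classical
  have hfinj : Function.Injective
      (fun a : V => (some ((0 : Fin (m + 1)), a) : Option (Fin (m + 1) × V))) := by
    intro a b h; simpa using h
  have hFsub : myF G H m ⊆ (genMycielski G m).edgeSet := by
    rintro e ⟨e', he', rfl⟩
    revert he'
    refine Sym2.ind (fun a b he' => ?_) e'
    have hab : G.Adj a b := he'.1
    rw [Sym2.map_pair_eq]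
    exact (SimpleGraph.mem_edgeSet (genMycielski G m)).mpr ⟨hab, Or.inl ⟨rfl, by simp⟩⟩
  have hcover : IsCoverGraph ((genMycielski G m).deleteEdges (myF G H m)) := by
    refine ⟨⟨dirr G H m c, fun u v h => h.1, fun u v h => dirr_total hm hc h,
      fun u v h h' => absurd h'.2 (not_lt.mpr h.2.le)⟩, ?_, ?_⟩
    · exact acyclic_of_mono (rho m c) (fun a b h => h.2)
    · rintro u v ⟨huv, hnac⟩
      exact hnac (dirr_nodep hm noTri huv)
  calc coverDeletion (genMycielski G m) ≤ (myF G H m).ncard :=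
        Nat.sInf_le ⟨myF G H m, hFsub, hcover, rfl⟩
    _ = (G.edgeSet \ H.edgeSet).ncard :=
        Set.ncard_image_of_injective _ (Sym2.map.injective hfinj)


theorem coverDeletion_genMycielski_le [Fintype V] (G : SimpleGraph V)
    (m : ℕ) (hm : 0 < m) :
    coverDeletion (genMycielski G m) ≤ G.edgeSet.ncard ∧
      (G.CliqueFree 3 →
        coverDeletion (genMycielski G m) ≤ G.edgeSet.ncard - e2 G) := by
  classical
  constructor
  · have h := mycielski_bound G ⊥ bot_le (fun _ => 0) (fun _ _ hab => hab.elim)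
      (fun _ _ _ _ had => had.elim) m hm
    simpa [SimpleGraph.edgeSet_bot] using h
  · intro hG3
    have hex : e2 G ∈ {n | ∃ H : SimpleGraph V, H ≤ G ∧ H.Colorable 2 ∧
        H.edgeSet.ncard = n} := by
      apply Nat.sSup_mem
      · exact ⟨0, ⊥, bot_le,
          ⟨SimpleGraph.Coloring.mk (fun _ => (0 : Fin 2)) (fun hadj => hadj.elim)⟩,
          by simp [SimpleGraph.edgeSet_bot]⟩
      · refine ⟨(Set.univ : Set (Sym2 V)).ncard, ?_⟩
        rintro n ⟨K, -, -, rfl⟩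
        exact Set.ncard_le_ncard (Set.subset_univ _) Set.finite_univ
    obtain ⟨K, hKG, hK2, hKcard⟩ := hex
    obtain ⟨C⟩ := hK2
    have noTri : ∀ a b d, G.Adj a b → K.Adj a d → ¬ G.Adj d b := by
      intro a b d hab had hdb
      exact hG3 {a, d, b} (SimpleGraph.is3Clique_triple_iff.mpr ⟨hKG had, hab, hdb⟩)
    have h := mycielski_bound G K hKG (fun x => C x) (fun a b hadj => C.valid hadj)
      noTri m hm
    refine le_trans h (le_of_eq ?_)
    rw [Set.ncard_diff (SimpleGraph.edgeSet_mono hKG), hKcard]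
end
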